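/- Let Φ = {φ_i}_{i=1}^n be a self-similar iterated function system on ℝ^k satisfying the open set condition, with contraction ratios r_1, …, r_n, and let X be the associated self-similar set. Then dim_H(X) = s, where s is the unique real number satisfying ∑_{i=1}^n r_i^s = 1. -/

import Mathlib

open Set MeasureTheory Metric Filter Topology ENNReal NNReal

noncomputable section

/-- The limsup of a sequence of sets: points belonging to infinitely many of them. -/
def limsupSet {X : Type*} (A : ℕ → Set X) : Set X :=
  ⋂ N, ⋃ n, ⋃ (_ : N ≤ n), A n

/-- `s`-dimensional Hausdorff content, via covers by countably many closed balls. -/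
def hContent {X : Type*} [PseudoMetricSpace X] (s : ℝ) (E : Set X) : ℝ≥0∞ :=
  ⨅ (c : ℕ → X) (r : ℕ → ℝ) (_ : ∀ n, 0 ≤ r n)
    (_ : E ⊆ ⋃ n, Metric.closedBall (c n) (r n)),
    ∑' n, ENNReal.ofReal (r n ^ s)

/-- A dimension function: continuous on `(0,∞)`, positive, tending to `0` at `0`. -/
def IsDimFun (f : ℝ → ℝ) : Prop :=
  ContinuousOn f (Set.Ioi 0) ∧ (∀ r > 0, 0 < f r) ∧
    Filter.Tendsto f (nhdsWithin 0 (Set.Ioi 0)) (nhds 0)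

/-- The `ρ`-approximate Hausdorff `f`-measure. -/
def preHausdorffF {X : Type*} [PseudoMetricSpace X] (f : ℝ → ℝ) (ρ : ℝ) (F : Set X) : ℝ≥0∞ :=
  ⨅ (c : ℕ → X) (r : ℕ → ℝ) (_ : ∀ n, 0 < r n ∧ r n < ρ)
    (_ : F ⊆ ⋃ n, Metric.ball (c n) (r n)),
    ∑' n, ENNReal.ofReal (f (r n))

/-- The Hausdorff `f`-measure, obtained as `ρ → 0` (equivalently, the supremum over `ρ > 0`). -/
def hausdorffF {X : Type*} [PseudoMetricSpace X] (f : ℝ → ℝ) (F : Set X) : ℝ≥0∞ :=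
  ⨆ (ρ : ℝ) (_ : 0 < ρ), preHausdorffF f ρ F

end


namespace Moran

variable {k n : ℕ}

/-- Composition of the IFS maps along a word. -/
def phiL (φ : Fin n → (Fin k → ℝ) → (Fin k → ℝ)) : List (Fin n) → (Fin k → ℝ) → (Fin k → ℝ)
  | [] => id
  | i :: w => φ i ∘ phiL φ w

/-- Product of ratios along a word. -/
def rL (r : Fin n → ℝ) (w : List (Fin n)) : ℝ := (w.map r).prod

@[simp] lemma rL_nil (r : Fin n → ℝ) : rL r [] = 1 := rfl
@[simp] lemma rL_cons (r : Fin n → ℝ) (i : Fin n) (w : List (Fin n)) :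
    rL r (i :: w) = r i * rL r w := by simp [rL]
lemma rL_append (r : Fin n → ℝ) (w v : List (Fin n)) :
    rL r (w ++ v) = rL r w * rL r v := by simp [rL]

lemma rL_pos {r : Fin n → ℝ} (hr : ∀ i, 0 < r i) (w : List (Fin n)) : 0 < rL r w := by
  induction w with
  | nil => norm_num
  | cons i w ih => simpa using mul_pos (hr i) ih

lemma rL_le_one {r : Fin n → ℝ} (hr : ∀ i, 0 < r i ∧ r i < 1) (w : List (Fin n)) :
    rL r w ≤ 1 := by
  induction w with
  | nil => simp
  | cons i w ih =>
    simp only [rL_cons]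
    calc r i * rL r w ≤ 1 * 1 := by
          apply mul_le_mul (hr i).2.le ih (rL_pos (fun j => (hr j).1) w).le zero_le_one
      _ = 1 := by ring

lemma rL_le_pow {r : Fin n → ℝ} {R : ℝ} (hr : ∀ i, 0 < r i) (hR : ∀ i, r i ≤ R)
    (w : List (Fin n)) : rL r w ≤ R ^ w.length := by
  induction w with
  | nil => simp
  | cons i w ih =>
    have hR0 : 0 ≤ R := le_trans (hr i).le (hR i)
    simp only [rL_cons, List.length_cons, pow_succ]
    rw [mul_comm (R ^ w.length) R]
    exact mul_le_mul (hR i) ih (rL_pos hr w).le hR0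

@[simp] lemma phiL_nil (φ : Fin n → (Fin k → ℝ) → (Fin k → ℝ)) (x : Fin k → ℝ) :
    phiL φ [] x = x := rfl
@[simp] lemma phiL_cons (φ : Fin n → (Fin k → ℝ) → (Fin k → ℝ)) (i : Fin n) (w : List (Fin n))
    (x : Fin k → ℝ) : phiL φ (i :: w) x = φ i (phiL φ w x) := rfl

lemma phiL_append (φ : Fin n → (Fin k → ℝ) → (Fin k → ℝ)) (w v : List (Fin n)) (x : Fin k → ℝ) :
    phiL φ (w ++ v) x = phiL φ w (phiL φ v x) := by
  induction w with
  | nil => simp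
  | cons i w ih => simp [ih]

variable {φ : Fin n → (Fin k → ℝ) → (Fin k → ℝ)} {r : Fin n → ℝ}

lemma dist_phiL (hsim : ∀ i x y, dist (φ i x) (φ i y) = r i * dist x y)
    (w : List (Fin n)) (x y : Fin k → ℝ) :
    dist (phiL φ w x) (phiL φ w y) = rL r w * dist x y := by
  induction w with
  | nil => simp
  | cons i w ih => simp [hsim, ih, mul_assoc]

lemma phiL_image_subset {A : Set (Fin k → ℝ)} (hA : ∀ i, φ i '' A ⊆ A) (w : List (Fin n)) :
    phiL φ w '' A ⊆ A := by
  induction w with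
  | nil => rintro x ⟨y, hy, rfl⟩; exact hy
  | cons i w ih =>
    intro x hx
    rcases hx with ⟨y, hy, rfl⟩
    exact hA i ⟨phiL φ w y, ih ⟨y, hy, rfl⟩, rfl⟩

lemma phiL_mem {A : Set (Fin k → ℝ)} (hA : ∀ i, φ i '' A ⊆ A) (w : List (Fin n))
    {x : Fin k → ℝ} (hx : x ∈ A) : phiL φ w x ∈ A :=
  phiL_image_subset hA w ⟨x, hx, rfl⟩

lemma phiL_lipschitz (hr : ∀ i, 0 < r i)
    (hsim : ∀ i x y, dist (φ i x) (φ i y) = r i * dist x y) (w : List (Fin n)) :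
    LipschitzWith (rL r w).toNNReal (phiL φ w) := by
  apply LipschitzWith.of_dist_le_mul
  intro x y
  rw [dist_phiL hsim, Real.coe_toNNReal _ (rL_pos hr w).le]

lemma phiL_continuous (hr : ∀ i, 0 < r i)
    (hsim : ∀ i x y, dist (φ i x) (φ i y) = r i * dist x y) (w : List (Fin n)) :
    Continuous (phiL φ w) := (phiL_lipschitz hr hsim w).continuous

lemma phiL_antilipschitz (hr : ∀ i, 0 < r i)
    (hsim : ∀ i x y, dist (φ i x) (φ i y) = r i * dist x y) (w : List (Fin n)) :
    AntilipschitzWith (rL r w)⁻¹.toNNReal (phiL φ w) := by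
  apply AntilipschitzWith.of_le_mul_dist
  intro x y
  rw [dist_phiL hsim, Real.coe_toNNReal _ (inv_nonneg.2 (rL_pos hr w).le)]
  rw [← mul_assoc, inv_mul_cancel₀ (rL_pos hr w).ne', one_mul]

lemma phiL_injective (hr : ∀ i, 0 < r i)
    (hsim : ∀ i x y, dist (φ i x) (φ i y) = r i * dist x y) (w : List (Fin n)) :
    Function.Injective (phiL φ w) := (phiL_antilipschitz hr hsim w).injective

/-- iterated covering of the attractor -/
lemma attractor_cover {X : Set (Fin k → ℝ)} (hX : X = ⋃ i, φ i '' X) (m : ℕ) :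
    ∀ x ∈ X, ∃ w : List (Fin n), w.length = m ∧ x ∈ phiL φ w '' X := by
  induction m with
  | zero => intro x hx; exact ⟨[], rfl, by simpa using hx⟩
  | succ m ih =>
    intro x hx
    rw [hX] at hx
    rcases mem_iUnion.1 hx with ⟨i, y, hy, rfl⟩
    rcases ih y hy with ⟨w, hwl, z, hz, hzy⟩
    exact ⟨i :: w, by simp [hwl], z, hz, by simp [hzy]⟩

/-- Disjointness of images of `U` along incomparable words. -/
lemma disjoint_images (hr : ∀ i, 0 < r i)
    (hsim : ∀ i x y, dist (φ i x) (φ i y) = r i * dist x y)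
    {U : Set (Fin k → ℝ)} (hUinv : ∀ i, φ i '' U ⊆ U)
    (hUdisj : ∀ i j, i ≠ j → Disjoint (φ i '' U) (φ j '' U)) :
    ∀ w w' : List (Fin n), ¬ w <+: w' → ¬ w' <+: w →
      Disjoint (phiL φ w '' U) (phiL φ w' '' U) := by
  intro w
  induction w with
  | nil => intro w' h _; exact absurd (List.nil_prefix) h
  | cons i w ih =>
    intro w' h h'
    match w' with
    | [] => exact absurd (List.nil_prefix) h'
    | j :: w'' =>
      by_cases hij : i = j
      · subst hij
        have hw : ¬ w <+: w'' := fun hp => h (by simpa using hp)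
        have hw' : ¬ w'' <+: w := fun hp => h' (by simpa using hp)
        have hd := ih w'' hw hw'
        have hinj : Function.Injective (φ i) := by
          intro x y hxy
          have h0 := hsim i x y
          rw [hxy, dist_self] at h0
          have : dist x y = 0 := by
            have := h0.symm
            nlinarith [hr i, dist_nonneg (x := x) (y := y)]
          exact dist_eq_zero.1 this
        have : Disjoint (φ i '' (phiL φ w '' U)) (φ i '' (phiL φ w'' '' U)) :=
          (Set.disjoint_image_iff hinj).2 hd
        simp only [Set.image_image] at this; exact this
      · have h1 : phiL φ (i :: w) '' U ⊆ φ i '' U := by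
          intro x hx; rcases hx with ⟨y, hy, rfl⟩
          exact ⟨phiL φ w y, phiL_mem hUinv w hy, rfl⟩
        have h2 : phiL φ (j :: w'') '' U ⊆ φ j '' U := by
          intro x hx; rcases hx with ⟨y, hy, rfl⟩
          exact ⟨phiL φ w'' y, phiL_mem hUinv w'' hy, rfl⟩
        exact (hUdisj i j hij).mono h1 h2

end Moran

namespace Moran
variable {n : ℕ}

/-- weights extended to ℕ by zero -/
def pe (p : Fin n → ℝ) (j : ℕ) : ℝ := if h : j < n then p ⟨j, h⟩ else 0

/-- cumulative sums -/
def cw (p : Fin n → ℝ) (j : ℕ) : ℝ := ∑ i ∈ Finset.range j, pe p i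

lemma pe_nonneg {p : Fin n → ℝ} (hp : ∀ i, 0 < p i) (j : ℕ) : 0 ≤ pe p j := by
  unfold pe; split <;> simp [le_of_lt, hp]

@[simp] lemma cw_zero (p : Fin n → ℝ) : cw p 0 = 0 := by simp [cw]

lemma cw_succ (p : Fin n → ℝ) (i : Fin n) : cw p (i + 1) = cw p i + p i := by
  simp [cw, Finset.sum_range_succ, pe, i.isLt]

lemma cw_mono {p : Fin n → ℝ} (hp : ∀ i, 0 < p i) : Monotone (cw p) := by
  intro a b hab
  exact Finset.sum_le_sum_of_subset_of_nonneg (Finset.range_subset_range.2 hab)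
    (fun i _ _ => pe_nonneg hp i)

lemma cw_n {p : Fin n → ℝ} (hp1 : ∑ i, p i = 1) : cw p n = 1 := by
  rw [cw, ← Fin.sum_univ_eq_sum_range fun j => pe p j, ← hp1]
  apply Finset.sum_congr rfl
  intro i _
  simp [pe, i.isLt]

lemma cw_nonneg {p : Fin n → ℝ} (hp : ∀ i, 0 < p i) (j : ℕ) : 0 ≤ cw p j := by
  simpa using cw_mono hp (Nat.zero_le j)

lemma cw_le_one {p : Fin n → ℝ} (hp : ∀ i, 0 < p i) (hp1 : ∑ i, p i = 1) {j : ℕ}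
    (hj : j ≤ n) : cw p j ≤ 1 := by
  simpa [cw_n hp1] using cw_mono hp hj

/-- the digit of `t`: unique `i` with `cw i ≤ t < cw (i+1)`, for `t ∈ [0,1)`. -/
lemma exists_digit {p : Fin n → ℝ} (hn : 0 < n) (hp : ∀ i, 0 < p i) (hp1 : ∑ i, p i = 1)
    {t : ℝ} (ht : t ∈ Ico (0:ℝ) 1) :
    ∃ i : Fin n, cw p i ≤ t ∧ t < cw p (i + 1) := by
  classical
  set S := (Finset.range n).filter (fun j => cw p j ≤ t) with hS
  have h0S : 0 ∈ S := by simp [hS, hn, ht.1]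
  have hSne : S.Nonempty := ⟨0, h0S⟩
  set j := S.max' hSne with hj
  have hjS : j ∈ S := S.max'_mem hSne
  have hjn : j < n := (Finset.mem_filter.1 hjS).1 |> Finset.mem_range.1
  refine ⟨⟨j, hjn⟩, (Finset.mem_filter.1 hjS).2, ?_⟩
  by_cases hj1 : j + 1 < n
  · by_contra hcon
    push_neg at hcon
    have : j + 1 ∈ S := Finset.mem_filter.2 ⟨Finset.mem_range.2 hj1, hcon⟩
    have := S.le_max' _ this
    omega
  · have hj1n : j + 1 = n := by omega
    have : cw p (j + 1) = 1 := by rw [hj1n]; exact cw_n hp1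
    simpa [this] using ht.2

lemma digit_unique {p : Fin n → ℝ} (hp : ∀ i, 0 < p i) {t : ℝ} {i i' : Fin n}
    (h : cw p i ≤ t ∧ t < cw p (i + 1)) (h' : cw p i' ≤ t ∧ t < cw p (i' + 1)) : i = i' := by
  by_contra hne
  rcases lt_or_gt_of_ne (fun hc => hne (Fin.ext hc) : (i:ℕ) ≠ i') with hlt | hlt
  · exact absurd ((h.2.trans_le (cw_mono hp hlt)).trans_le h'.1) (lt_irrefl t)
  · exact absurd ((h'.2.trans_le (cw_mono hp hlt)).trans_le h.1) (lt_irrefl t)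

/-- left endpoint of the interval of a word -/
def Lw (p : Fin n → ℝ) : List (Fin n) → ℝ
  | [] => 0
  | i :: w => cw p i + p i * Lw p w

/-- length of the interval of a word -/
def Pw (p : Fin n → ℝ) (w : List (Fin n)) : ℝ := (w.map p).prod

/-- the base interval of a word -/
def Iw (p : Fin n → ℝ) (w : List (Fin n)) : Set ℝ := Ico (Lw p w) (Lw p w + Pw p w)

@[simp] lemma Pw_nil (p : Fin n → ℝ) : Pw p [] = 1 := rfl
@[simp] lemma Pw_cons (p : Fin n → ℝ) (i : Fin n) (w : List (Fin n)) :
    Pw p (i :: w) = p i * Pw p w := by simp [Pw]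

lemma Pw_pos {p : Fin n → ℝ} (hp : ∀ i, 0 < p i) (w : List (Fin n)) : 0 < Pw p w := by
  induction w with
  | nil => norm_num
  | cons i w ih => simpa using mul_pos (hp i) ih

lemma Lw_nonneg {p : Fin n → ℝ} (hp : ∀ i, 0 < p i) (w : List (Fin n)) : 0 ≤ Lw p w := by
  induction w with
  | nil => simp [Lw]
  | cons i w ih =>
    have := cw_nonneg hp i
    have := (hp i).le
    simp only [Lw]
    positivity

lemma Lw_add_Pw_le_one {p : Fin n → ℝ} (hp : ∀ i, 0 < p i) (hp1 : ∑ i, p i = 1)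
    (w : List (Fin n)) : Lw p w + Pw p w ≤ 1 := by
  induction w with
  | nil => simp [Lw]
  | cons i w ih =>
    simp only [Lw, Pw_cons]
    have h1 : cw p i + p i * (Lw p w + Pw p w) ≤ cw p i + p i := by
      nlinarith [hp i]
    have h2 : cw p i + p i ≤ 1 := by
      rw [← cw_succ p i]
      exact cw_le_one hp hp1 i.isLt
    nlinarith

lemma mem_Iw_cons {p : Fin n → ℝ} (hp : ∀ i, 0 < p i) {i : Fin n} {w : List (Fin n)} {t : ℝ} :
    t ∈ Iw p (i :: w) ↔ (t - cw p i) / p i ∈ Iw p w := by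
  have hpi := hp i
  simp only [Iw, mem_Ico, Lw, Pw_cons]
  constructor
  · rintro ⟨h1, h2⟩
    constructor
    · rw [le_div_iff₀ hpi]; linarith
    · rw [div_lt_iff₀ hpi]; nlinarith
  · rintro ⟨h1, h2⟩
    rw [le_div_iff₀ hpi] at h1
    rw [div_lt_iff₀ hpi] at h2
    constructor <;> nlinarith

lemma Iw_subset_unit {p : Fin n → ℝ} (hp : ∀ i, 0 < p i) (hp1 : ∑ i, p i = 1)
    (w : List (Fin n)) : Iw p w ⊆ Ico 0 1 := by
  intro t ht
  rcases ht with ⟨h1, h2⟩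
  exact ⟨le_trans (Lw_nonneg hp w) h1, h2.trans_le (Lw_add_Pw_le_one hp hp1 w)⟩

lemma Iw_append_subset {p : Fin n → ℝ} (hp : ∀ i, 0 < p i) (hp1 : ∑ i, p i = 1)
    (w v : List (Fin n)) : Iw p (w ++ v) ⊆ Iw p w := by
  induction w with
  | nil =>
    intro t ht
    have := Iw_subset_unit hp hp1 v ht
    simpa [Iw, Lw] using this
  | cons i w ih =>
    intro t ht
    rw [List.cons_append, mem_Iw_cons hp] at ht
    exact (mem_Iw_cons hp).2 (ih ht)

lemma Iw_prefix_subset {p : Fin n → ℝ} (hp : ∀ i, 0 < p i) (hp1 : ∑ i, p i = 1)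
    {w w' : List (Fin n)} (h : w <+: w') : Iw p w' ⊆ Iw p w := by
  rcases h with ⟨v, rfl⟩
  exact Iw_append_subset hp hp1 w v

lemma Iw_subset_digit {p : Fin n → ℝ} (hp : ∀ i, 0 < p i) (hp1 : ∑ i, p i = 1)
    (i : Fin n) (w : List (Fin n)) : Iw p (i :: w) ⊆ Ico (cw p i) (cw p (i+1)) := by
  intro t ht
  rcases ht with ⟨h1, h2⟩
  simp only [Lw, Pw_cons] at h1 h2
  have hL := Lw_nonneg hp w
  have hLP := Lw_add_Pw_le_one hp hp1 w
  have hpi := hp i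
  rw [cw_succ]
  constructor
  · nlinarith
  · nlinarith

lemma exists_word {p : Fin n → ℝ} (hn : 0 < n) (hp : ∀ i, 0 < p i) (hp1 : ∑ i, p i = 1)
    (m : ℕ) : ∀ t ∈ Ico (0:ℝ) 1, ∃ w : List (Fin n), w.length = m ∧ t ∈ Iw p w := by
  induction m with
  | zero => intro t ht; exact ⟨[], rfl, by simpa [Iw, Lw] using ht⟩
  | succ m ih =>
    intro t ht
    obtain ⟨i, hi1, hi2⟩ := exists_digit hn hp hp1 ht
    have hpi := hp i
    have ht' : (t - cw p i) / p i ∈ Ico (0:ℝ) 1 := by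
      rw [cw_succ] at hi2
      constructor
      · apply div_nonneg (by linarith) hpi.le
      · rw [div_lt_one hpi]; linarith
    obtain ⟨w, hwl, hw⟩ := ih _ ht'
    exact ⟨i :: w, by simp [hwl], (mem_Iw_cons hp).2 hw⟩

lemma word_unique {p : Fin n → ℝ} (hp : ∀ i, 0 < p i) (hp1 : ∑ i, p i = 1) :
    ∀ (w w' : List (Fin n)), w.length = w'.length → ∀ t, t ∈ Iw p w → t ∈ Iw p w' → w = w' := by
  intro w
  induction w with
  | nil => intro w' hl _ _ _; exact (List.length_eq_zero_iff.1 hl.symm).symm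
  | cons i w ih =>
    intro w' hl t htw htw'
    match w' with
    | [] => simp at hl
    | j :: w'' =>
      have hij : i = j := by
        apply digit_unique hp (t := t)
        · have := Iw_subset_digit hp hp1 i w htw; exact ⟨this.1, this.2⟩
        · have := Iw_subset_digit hp hp1 j w'' htw'; exact ⟨this.1, this.2⟩
      subst hij
      have hl' : w.length = w''.length := by simpa using hl
      rw [mem_Iw_cons hp] at htw htw'
      rw [ih w'' hl' _ htw htw']

lemma volume_Iw {p : Fin n → ℝ} (w : List (Fin n)) :
    volume (Iw p w) = ENNReal.ofReal (Pw p w) := by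
  simp [Iw, Real.volume_Ico]

lemma measurable_Iw (p : Fin n → ℝ) (w : List (Fin n)) : MeasurableSet (Iw p w) :=
  measurableSet_Ico

end Moran

namespace Moran
variable {k n : ℕ}

open Classical in
/-- The length-`m` word of `t ∈ [0,1)`. -/
noncomputable def Wd (p : Fin n → ℝ) (i₀ : Fin n) (m : ℕ) (t : ℝ) : List (Fin n) :=
  if h : ∃ w : List (Fin n), w.length = m ∧ t ∈ Iw p w then h.choose else List.replicate m i₀

variable {p : Fin n → ℝ} {i₀ : Fin n}

lemma length_Wd (p : Fin n → ℝ) (i₀ : Fin n) (m : ℕ) (t : ℝ) : (Wd p i₀ m t).length = m := by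
  unfold Wd
  classical
  split
  · next h => exact h.choose_spec.1
  · simp

lemma Wd_spec (hn : 0 < n) (hp : ∀ i, 0 < p i) (hp1 : ∑ i, p i = 1) (m : ℕ) {t : ℝ}
    (ht : t ∈ Ico (0:ℝ) 1) : t ∈ Iw p (Wd p i₀ m t) := by
  have h : ∃ w : List (Fin n), w.length = m ∧ t ∈ Iw p w := exists_word hn hp hp1 m t ht
  unfold Wd
  classical
  rw [dif_pos h]
  exact h.choose_spec.2

lemma Wd_eq_of_mem (hn : 0 < n) (hp : ∀ i, 0 < p i) (hp1 : ∑ i, p i = 1) {m : ℕ} {t : ℝ}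
    {w : List (Fin n)} (hwl : w.length = m) (htw : t ∈ Iw p w) : Wd p i₀ m t = w := by
  have ht : t ∈ Ico (0:ℝ) 1 := Iw_subset_unit hp hp1 w htw
  exact word_unique hp hp1 _ _ (by rw [length_Wd, hwl]) t (Wd_spec hn hp hp1 m ht) htw

lemma Wd_junk {m : ℕ} {t : ℝ} (hp : ∀ i, 0 < p i) (hp1 : ∑ i, p i = 1)
    (ht : t ∉ Ico (0:ℝ) 1) : Wd p i₀ m t = List.replicate m i₀ := by
  unfold Wd
  classical
  rw [dif_neg]
  rintro ⟨w, -, htw⟩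
  exact ht (Iw_subset_unit hp hp1 w htw)

lemma Wd_fiber (hn : 0 < n) (hp : ∀ i, 0 < p i) (hp1 : ∑ i, p i = 1) (m : ℕ)
    (w : List (Fin n)) :
    {t : ℝ | Wd p i₀ m t = w} =
      (if w.length = m then Iw p w else ∅) ∪
      (if w = List.replicate m i₀ then (Ico (0:ℝ) 1)ᶜ else ∅) := by
  ext t
  by_cases ht : t ∈ Ico (0:ℝ) 1
  · simp only [mem_setOf_eq, mem_union]
    constructor
    · rintro rfl
      left
      rw [if_pos (length_Wd p i₀ m t)]
      exact Wd_spec hn hp hp1 m ht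
    · rintro (h | h)
      · by_cases hl : w.length = m
        · rw [if_pos hl] at h
          exact Wd_eq_of_mem hn hp hp1 hl h
        · rw [if_neg hl] at h; exact absurd h (notMem_empty t)
      · by_cases hw : w = List.replicate m i₀
        · rw [if_pos hw] at h; exact absurd ht h
        · rw [if_neg hw] at h; exact absurd h (notMem_empty t)
  · simp only [mem_setOf_eq, mem_union]
    rw [Wd_junk hp hp1 ht]
    constructor
    · rintro rfl
      right
      rw [if_pos rfl]
      exact ht
    · rintro (h | h)
      · by_cases hl : w.length = m
        · rw [if_pos hl] at h
          exact absurd (Iw_subset_unit hp hp1 w h) ht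
        · rw [if_neg hl] at h; exact absurd h (notMem_empty t)
      · by_cases hw : w = List.replicate m i₀
        · exact hw.symm
        · rw [if_neg hw] at h; exact absurd h (notMem_empty t)

lemma measurableSet_Wd_fiber (hn : 0 < n) (hp : ∀ i, 0 < p i) (hp1 : ∑ i, p i = 1) (m : ℕ)
    (w : List (Fin n)) : MeasurableSet {t : ℝ | Wd p i₀ m t = w} := by
  rw [Wd_fiber hn hp hp1 m w]
  apply MeasurableSet.union
  · split
    · exact measurable_Iw p w
    · exact MeasurableSet.empty
  · split
    · exact measurableSet_Ico.compl
    · exact MeasurableSet.empty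

lemma Wd_prefix (hn : 0 < n) (hp : ∀ i, 0 < p i) (hp1 : ∑ i, p i = 1) (m : ℕ) (t : ℝ) :
    Wd p i₀ m t <+: Wd p i₀ (m + 1) t := by
  by_cases ht : t ∈ Ico (0:ℝ) 1
  · have h1 : t ∈ Iw p (Wd p i₀ (m+1) t) := Wd_spec hn hp hp1 (m+1) ht
    have htake : (Wd p i₀ (m+1) t).take m <+: Wd p i₀ (m+1) t := List.take_prefix m _
    have hlen : ((Wd p i₀ (m+1) t).take m).length = m := by
      rw [List.length_take, length_Wd]; omega
    have h2 : t ∈ Iw p ((Wd p i₀ (m+1) t).take m) := Iw_prefix_subset hp hp1 htake h1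
    rw [Wd_eq_of_mem hn hp hp1 hlen h2]
    exact htake
  · rw [Wd_junk hp hp1 ht, Wd_junk hp hp1 ht]
    exact ⟨[i₀], List.replicate_succ'.symm⟩

lemma Wd_prefix_le (hn : 0 < n) (hp : ∀ i, 0 < p i) (hp1 : ∑ i, p i = 1) {m m' : ℕ}
    (h : m ≤ m') (t : ℝ) : Wd p i₀ m t <+: Wd p i₀ m' t := by
  induction m', h using Nat.le_induction with
  | base => exact List.prefix_refl _
  | succ m' hm ih => exact ih.trans (Wd_prefix hn hp hp1 m' t)

/-- The approximating maps. -/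
noncomputable def hseq (φ : Fin n → (Fin k → ℝ) → (Fin k → ℝ)) (p : Fin n → ℝ) (i₀ : Fin n)
    (x₀ : Fin k → ℝ) (m : ℕ) (t : ℝ) : Fin k → ℝ :=
  phiL φ (Wd p i₀ m t) x₀

variable {φ : Fin n → (Fin k → ℝ) → (Fin k → ℝ)} {r : Fin n → ℝ} {x₀ : Fin k → ℝ}

lemma measurable_hseq (hn : 0 < n) (hp : ∀ i, 0 < p i) (hp1 : ∑ i, p i = 1) (m : ℕ) :
    Measurable (hseq φ p i₀ x₀ m) := by
  intro A _
  have : hseq φ p i₀ x₀ m ⁻¹' A =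
      ⋃ (w : List (Fin n)) (_ : phiL φ w x₀ ∈ A), {t : ℝ | Wd p i₀ m t = w} := by
    ext t
    simp only [mem_preimage, mem_iUnion, mem_setOf_eq, hseq]
    constructor
    · intro h; exact ⟨Wd p i₀ m t, h, rfl⟩
    · rintro ⟨w, hw, rfl⟩; exact hw
  rw [this]
  exact MeasurableSet.iUnion fun w => MeasurableSet.iUnion fun _ =>
    measurableSet_Wd_fiber hn hp hp1 m w

lemma cauchySeq_hseq (hn : 0 < n) (hp : ∀ i, 0 < p i) (hp1 : ∑ i, p i = 1)
    (hr : ∀ i, 0 < r i) {R : ℝ} (hR : ∀ i, r i ≤ R) (hR1 : R < 1)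
    (hsim : ∀ i x y, dist (φ i x) (φ i y) = r i * dist x y)
    {X : Set (Fin k → ℝ)} (hXb : Bornology.IsBounded X) (hXinv : ∀ i, φ i '' X ⊆ X)
    (hx₀ : x₀ ∈ X) (t : ℝ) : CauchySeq (fun m => hseq φ p i₀ x₀ m t) := by
  apply cauchySeq_of_le_geometric R (Metric.diam X) hR1
  intro m
  obtain ⟨v, hv⟩ := Wd_prefix hn hp hp1 m t (i₀ := i₀)
  have : hseq φ p i₀ x₀ (m+1) t = phiL φ (Wd p i₀ m t) (phiL φ v x₀) := by
    rw [hseq, ← hv, phiL_append]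
  rw [hseq, this, dist_phiL hsim]
  have h1 : rL r (Wd p i₀ m t) ≤ R ^ m := by
    have := rL_le_pow hr hR (Wd p i₀ m t)
    rwa [length_Wd] at this
  have h2 : dist x₀ (phiL φ v x₀) ≤ Metric.diam X :=
    dist_le_diam_of_mem hXb hx₀ (phiL_mem hXinv v hx₀)
  have h3 : 0 ≤ dist x₀ (phiL φ v x₀) := dist_nonneg
  have h4 : 0 < rL r (Wd p i₀ m t) := rL_pos hr _
  calc rL r (Wd p i₀ m t) * dist x₀ (phiL φ v x₀) ≤ R ^ m * Metric.diam X := by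
        have hR0 : 0 ≤ R := le_trans (hr i₀).le (hR i₀)
        apply mul_le_mul h1 h2 h3 (pow_nonneg hR0 m)
    _ = Metric.diam X * R ^ m := by ring

/-- The coding map. -/
noncomputable def piMap (φ : Fin n → (Fin k → ℝ) → (Fin k → ℝ)) (p : Fin n → ℝ) (i₀ : Fin n)
    (x₀ : Fin k → ℝ) (t : ℝ) : Fin k → ℝ :=
  limUnder atTop (fun m => hseq φ p i₀ x₀ m t)

lemma tendsto_piMap (hn : 0 < n) (hp : ∀ i, 0 < p i) (hp1 : ∑ i, p i = 1)
    (hr : ∀ i, 0 < r i) {R : ℝ} (hR : ∀ i, r i ≤ R) (hR1 : R < 1)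
    (hsim : ∀ i x y, dist (φ i x) (φ i y) = r i * dist x y)
    {X : Set (Fin k → ℝ)} (hXb : Bornology.IsBounded X) (hXinv : ∀ i, φ i '' X ⊆ X)
    (hx₀ : x₀ ∈ X) (t : ℝ) :
    Tendsto (fun m => hseq φ p i₀ x₀ m t) atTop (𝓝 (piMap φ p i₀ x₀ t)) :=
  (cauchySeq_hseq hn hp hp1 hr hR hR1 hsim hXb hXinv hx₀ t).tendsto_limUnder

lemma measurable_piMap (hn : 0 < n) (hp : ∀ i, 0 < p i) (hp1 : ∑ i, p i = 1)
    (hr : ∀ i, 0 < r i) {R : ℝ} (hR : ∀ i, r i ≤ R) (hR1 : R < 1)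
    (hsim : ∀ i x y, dist (φ i x) (φ i y) = r i * dist x y)
    {X : Set (Fin k → ℝ)} (hXb : Bornology.IsBounded X) (hXinv : ∀ i, φ i '' X ⊆ X)
    (hx₀ : x₀ ∈ X) : Measurable (piMap φ p i₀ x₀) := by
  apply measurable_of_tendsto_metrizable (fun m => measurable_hseq hn hp hp1 m)
  rw [tendsto_pi_nhds]
  exact fun t => tendsto_piMap hn hp hp1 hr hR hR1 hsim hXb hXinv hx₀ t

lemma piMap_mem_X (hn : 0 < n) (hp : ∀ i, 0 < p i) (hp1 : ∑ i, p i = 1)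
    (hr : ∀ i, 0 < r i) {R : ℝ} (hR : ∀ i, r i ≤ R) (hR1 : R < 1)
    (hsim : ∀ i x y, dist (φ i x) (φ i y) = r i * dist x y)
    {X : Set (Fin k → ℝ)} (hXcp : IsCompact X) (hXinv : ∀ i, φ i '' X ⊆ X)
    (hx₀ : x₀ ∈ X) (t : ℝ) : piMap φ p i₀ x₀ t ∈ X := by
  apply hXcp.isClosed.mem_of_tendsto
    (tendsto_piMap hn hp hp1 hr hR hR1 hsim hXcp.isBounded hXinv hx₀ t)
  filter_upwards with m
  exact phiL_mem hXinv _ hx₀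

lemma piMap_mem_cylinder (hn : 0 < n) (hp : ∀ i, 0 < p i) (hp1 : ∑ i, p i = 1)
    (hr : ∀ i, 0 < r i) {R : ℝ} (hR : ∀ i, r i ≤ R) (hR1 : R < 1)
    (hsim : ∀ i x y, dist (φ i x) (φ i y) = r i * dist x y)
    {X : Set (Fin k → ℝ)} (hXcp : IsCompact X) (hXinv : ∀ i, φ i '' X ⊆ X)
    (hx₀ : x₀ ∈ X) (m : ℕ) (t : ℝ) :
    piMap φ p i₀ x₀ t ∈ phiL φ (Wd p i₀ m t) '' X := by
  have hcl : IsClosed (phiL φ (Wd p i₀ m t) '' X) :=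
    (hXcp.image (phiL_continuous hr hsim _)).isClosed
  apply hcl.mem_of_tendsto (tendsto_piMap hn hp hp1 hr hR hR1 hsim hXcp.isBounded hXinv hx₀ t)
  rw [eventually_atTop]
  refine ⟨m, fun m' hm' => ?_⟩
  obtain ⟨v, hv⟩ := Wd_prefix_le hn hp hp1 hm' t (i₀ := i₀)
  rw [hseq, ← hv, phiL_append]
  exact ⟨phiL φ v x₀, phiL_mem hXinv v hx₀, rfl⟩

end Moran

namespace Moran
variable {k n : ℕ} {φ : Fin n → (Fin k → ℝ) → (Fin k → ℝ)} {r : Fin n → ℝ}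

lemma rL_prefix (hr : ∀ i, 0 < r i ∧ r i < 1) {w v : List (Fin n)} (h : w <+: v) :
    rL r v ≤ rL r w := by
  rcases h with ⟨u, rfl⟩
  rw [rL_append]
  calc rL r w * rL r u ≤ rL r w * 1 :=
        mul_le_mul_of_nonneg_left (rL_le_one hr u) (rL_pos (fun i => (hr i).1) w).le
    _ = rL r w := mul_one _

lemma Pw_eq_rL_rpow (hr : ∀ i, 0 < r i) (s : ℝ) (w : List (Fin n)) :
    Pw (fun i => r i ^ s) w = rL r w ^ s := by
  induction w with
  | nil => simp [Real.one_rpow]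
  | cons i w ih =>
    rw [Pw_cons, rL_cons, Real.mul_rpow (hr i).le (rL_pos hr w).le, ih]

lemma X_subset_closureU
    (hr : ∀ i, 0 < r i ∧ r i < 1) {Rmax : ℝ} (hmax : ∀ i, r i ≤ Rmax) (hmax1 : Rmax < 1)
    (hmax0 : 0 ≤ Rmax)
    (hsim : ∀ i x y, dist (φ i x) (φ i y) = r i * dist x y)
    {U X : Set (Fin k → ℝ)} (hUinv : ∀ i, φ i '' U ⊆ U) {u₀ : Fin k → ℝ} (hu₀ : u₀ ∈ U)
    (hXb : Bornology.IsBounded X) (hX : X = ⋃ i, φ i '' X) {x₀ : Fin k → ℝ} (hx₀ : x₀ ∈ X) :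
    X ⊆ closure U := by
  intro x hx
  rw [Metric.mem_closure_iff]
  intro ε hε
  set C := Metric.diam X + dist x₀ u₀ with hC
  have hC0 : 0 ≤ C := add_nonneg Metric.diam_nonneg dist_nonneg
  obtain ⟨m, hm⟩ := exists_pow_lt_of_lt_one (div_pos hε (by linarith : (0:ℝ) < C + 1)) hmax1
  obtain ⟨w, hwl, z, hz, hzx⟩ := attractor_cover hX m x hx
  refine ⟨phiL φ w u₀, phiL_mem hUinv w hu₀, ?_⟩
  have h1 : dist x (phiL φ w u₀) = rL r w * dist z u₀ := by rw [← hzx, dist_phiL hsim]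
  have h2 : dist z u₀ ≤ C := by
    have h := dist_triangle z x₀ u₀
    have := dist_le_diam_of_mem hXb hz hx₀
    simp only [hC]; linarith
  have h3 : rL r w ≤ Rmax ^ m := hwl ▸ rL_le_pow (fun i => (hr i).1) hmax w
  have h4 : rL r w * dist z u₀ ≤ Rmax ^ m * C :=
    mul_le_mul h3 h2 dist_nonneg (pow_nonneg hmax0 m)
  have h5 : Rmax ^ m * C < ε := by
    have hmc : Rmax ^ m * C ≤ (ε / (C + 1)) * C :=
      mul_le_mul_of_nonneg_right hm.le hC0
    have : (ε / (C + 1)) * C < ε := by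
      rw [div_mul_eq_mul_div, div_lt_iff₀ (by linarith)]
      nlinarith
    exact lt_of_le_of_lt hmc this
  rw [h1]; linarith

/-- The key ball estimate for the self-similar measure. -/
lemma ball_bound (hn : 0 < n) (hr : ∀ i, 0 < r i ∧ r i < 1)
    {Rmin Rmax : ℝ} (hmin0 : 0 < Rmin) (hmin : ∀ i, Rmin ≤ r i)
    (hmax : ∀ i, r i ≤ Rmax) (hmax1 : Rmax < 1)
    (hsim : ∀ i x y, dist (φ i x) (φ i y) = r i * dist x y)
    {U X : Set (Fin k → ℝ)} (hUne : U.Nonempty) (hUo : IsOpen U)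
    (hUb : Bornology.IsBounded U) (hUinv : ∀ i, φ i '' U ⊆ U)
    (hUdisj : ∀ i j, i ≠ j → Disjoint (φ i '' U) (φ j '' U))
    (hXcp : IsCompact X) (hX : X = ⋃ i, φ i '' X)
    {s : ℝ} (hs0 : 0 ≤ s) (hp1 : ∑ i, r i ^ s = 1)
    {i₀ : Fin n} {x₀ : Fin k → ℝ} (hx₀ : x₀ ∈ X) :
    ∃ N : ℝ≥0∞, N ≠ ⊤ ∧ ∀ (x : Fin k → ℝ) (ρ : ℝ), 0 < ρ → ρ < 1 →
      Measure.map (piMap φ (fun i => r i ^ s) i₀ x₀) (volume.restrict (Ico 0 1))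
        (closedBall x ρ) ≤ N * ENNReal.ofReal (ρ ^ s) := by
  classical
  set p : Fin n → ℝ := fun i => r i ^ s with hpdef
  have hp : ∀ i, 0 < p i := fun i => Real.rpow_pos_of_pos (hr i).1 s
  have hr1 : ∀ i, 0 < r i := fun i => (hr i).1
  have hmax0 : 0 ≤ Rmax := ((hr i₀).1.trans_le (hmax i₀)).le
  have hXinv : ∀ i, φ i '' X ⊆ X := by
    intro i
    conv_rhs => rw [hX]
    exact subset_iUnion (fun j => φ j '' X) i
  obtain ⟨u₀, hu₀⟩ := hUne
  have hXU : X ⊆ closure U :=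
    X_subset_closureU hr hmax hmax1 hmax0 hsim hUinv hu₀ hXcp.isBounded hX hx₀
  set dU := Metric.diam (closure U) with hdU
  have hdU0 : 0 ≤ dU := Metric.diam_nonneg
  have hvU0 : volume U ≠ 0 := (hUo.measure_pos volume ⟨u₀, hu₀⟩).ne'
  have hvUtop : volume U ≠ ⊤ := hUb.measure_lt_top.ne
  set A0 : ℝ≥0∞ := ENNReal.ofReal (Rmin ^ k) * volume U with hA0
  set B0 : ℝ≥0∞ := ENNReal.ofReal ((2 * (dU + 1)) ^ k) with hB0
  have hA0ne : A0 ≠ 0 := by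
    apply mul_ne_zero _ hvU0
    exact (ENNReal.ofReal_pos.2 (by positivity)).ne'
  have hA0top : A0 ≠ ⊤ := ENNReal.mul_ne_top ENNReal.ofReal_ne_top hvUtop
  refine ⟨B0 / A0, (ENNReal.div_lt_top ENNReal.ofReal_ne_top hA0ne).ne, ?_⟩
  intro x ρ hρ0 hρ1
  -- the cut set
  set Λ : Set (List (Fin n)) := {w | rL r w ≤ ρ ∧ ρ < rL r w.dropLast ∧
    ((phiL φ w '' X) ∩ closedBall x ρ).Nonempty} with hΛ
  -- lower bound on ratios in the cut set
  have hS1 : ∀ w ∈ Λ, Rmin * ρ < rL r w := by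
    intro w hw
    have hwne : w ≠ [] := by
      rintro rfl
      have hw1 : rL r [] ≤ ρ := hw.1
      rw [rL_nil] at hw1
      exact absurd (hw1.trans_lt hρ1) (lt_irrefl 1)
    have hsplit : w.dropLast ++ [w.getLast hwne] = w := List.dropLast_append_getLast hwne
    have : rL r w = rL r w.dropLast * r (w.getLast hwne) := by
      conv_lhs => rw [← hsplit]
      rw [rL_append]; simp [rL]
    rw [this]
    have h1 := hw.2.1
    have h2 := hmin (w.getLast hwne)
    have h3 := (hr (w.getLast hwne)).1
    nlinarith
  -- length bound
  obtain ⟨M, hM⟩ := exists_pow_lt_of_lt_one (mul_pos hmin0 hρ0) hmax1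
  have hS2 : ∀ w ∈ Λ, w.length ≤ M := by
    intro w hw
    by_contra hlen
    push_neg at hlen
    have h1 : rL r w ≤ Rmax ^ w.length := rL_le_pow hr1 hmax w
    have h2 : Rmax ^ w.length ≤ Rmax ^ M := pow_le_pow_of_le_one hmax0 hmax1.le hlen.le
    have := hS1 w hw
    linarith
  have hfin : Λ.Finite := (List.finite_length_le (Fin n) M).subset hS2
  set F := hfin.toFinset with hF
  have hmemF : ∀ w, w ∈ F ↔ w ∈ Λ := fun w => hfin.mem_toFinset
  -- antichain
  have hanti : ∀ w ∈ Λ, ∀ w' ∈ Λ, w ≠ w' → ¬ w <+: w' := by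
    intro w hw w' hw' hne hpre
    have hlt : w.length < w'.length := by
      rcases lt_or_eq_of_le hpre.length_le with h | h
      · exact h
      · exact absurd (hpre.eq_of_length h) hne
    have hpre' : w <+: w'.dropLast := by
      rw [List.dropLast_eq_take]
      rw [List.prefix_take_iff]
      exact ⟨hpre, by omega⟩
    have := rL_prefix hr hpre'
    have := hw.1
    have := hw'.2.1
    linarith
  -- pairwise disjointness of the pieces
  have hpair : (↑F : Set (List (Fin n))).PairwiseDisjoint (fun w => phiL φ w '' U) := by
    intro w hw w' hw' hne
    rw [Finset.mem_coe, hmemF] at hw hw'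
    exact disjoint_images hr1 hsim hUinv hUdisj w w'
      (hanti w hw w' hw' hne) (hanti w' hw' w hw (Ne.symm hne))
  -- measurability of the pieces
  have hmeas : ∀ w : List (Fin n), MeasurableSet (phiL φ w '' U) := by
    intro w
    exact (((phiL_continuous hr1 hsim w).measurableEmbedding
      (phiL_injective hr1 hsim w)).measurableSet_image).2 hUo.measurableSet
  -- volume lower bound on each piece
  have hHM : (μH[(k : ℝ)] : Measure (Fin k → ℝ)) = volume := by
    have := MeasureTheory.hausdorffMeasure_pi_real (ι := Fin k)
    simpa using this
  have hS6 : ∀ w ∈ Λ, ENNReal.ofReal (ρ ^ k) * A0 ≤ volume (phiL φ w '' U) := by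
    intro w hw
    have hrw : 0 < rL r w := rL_pos hr1 w
    have h1 := (phiL_antilipschitz hr1 hsim w).le_hausdorffMeasure_image
      (d := (k : ℝ)) (by positivity) U
    rw [hHM] at h1
    have hKco : ((((rL r w)⁻¹).toNNReal : ℝ≥0) : ℝ≥0∞) = ENNReal.ofReal (rL r w)⁻¹ := rfl
    rw [hKco, ENNReal.rpow_natCast, ← ENNReal.ofReal_pow (by positivity), inv_pow,
      ENNReal.ofReal_inv_of_pos (by positivity)] at h1
    set a : ℝ≥0∞ := ENNReal.ofReal (rL r w ^ k) with ha
    have ha0 : a ≠ 0 := (ENNReal.ofReal_pos.2 (by positivity)).ne'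
    have hatop : a ≠ ⊤ := ENNReal.ofReal_ne_top
    have h2 : a * volume U ≤ volume (phiL φ w '' U) := by
      calc a * volume U ≤ a * (a⁻¹ * volume (phiL φ w '' U)) := mul_le_mul_right h1 a
        _ = volume (phiL φ w '' U) := by
            rw [← mul_assoc, ENNReal.mul_inv_cancel ha0 hatop, one_mul]
    refine le_trans ?_ h2
    rw [hA0, ← mul_assoc]
    apply mul_le_mul_left
    rw [← ENNReal.ofReal_mul (by positivity), ← mul_pow, ha]
    apply ENNReal.ofReal_le_ofReal
    apply pow_le_pow_left₀ (by positivity)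
    have := hS1 w hw
    linarith
  -- inclusion in a big ball
  have hS7 : ∀ w ∈ Λ, phiL φ w '' U ⊆ closedBall x ((dU + 1) * ρ) := by
    rintro w hw y ⟨u, hu, rfl⟩
    obtain ⟨yy, ⟨z, hzX, rfl⟩, hyB⟩ := hw.2.2
    rw [mem_closedBall]
    have hd1 : dist (phiL φ w u) (phiL φ w z) = rL r w * dist u z := dist_phiL hsim w u z
    have hd2 : dist u z ≤ dU :=
      dist_le_diam_of_mem hUb.closure (subset_closure hu) (hXU hzX)
    have hd3 : rL r w * dist u z ≤ ρ * dU :=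
      mul_le_mul hw.1 hd2 dist_nonneg hρ0.le
    have := dist_triangle (phiL φ w u) (phiL φ w z) x
    rw [mem_closedBall] at hyB
    nlinarith
  -- counting
  have hcard : (F.card : ℝ≥0∞) * A0 ≤ B0 := by
    have hineq : (F.card : ℝ≥0∞) * (ENNReal.ofReal (ρ ^ k) * A0) ≤
        B0 * ENNReal.ofReal (ρ ^ k) := by
      calc (F.card : ℝ≥0∞) * (ENNReal.ofReal (ρ ^ k) * A0)
          = ∑ _w ∈ F, ENNReal.ofReal (ρ ^ k) * A0 := by
            rw [Finset.sum_const, nsmul_eq_mul]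
        _ ≤ ∑ w ∈ F, volume (phiL φ w '' U) :=
            Finset.sum_le_sum (fun w hw => hS6 w ((hmemF w).1 hw))
        _ = volume (⋃ w ∈ F, phiL φ w '' U) :=
            (measure_biUnion_finset hpair (fun w _ => hmeas w)).symm
        _ ≤ volume (closedBall x ((dU + 1) * ρ)) := by
            apply measure_mono
            intro y hy
            rw [mem_iUnion₂] at hy
            obtain ⟨w, hwF, hyw⟩ := hy
            exact hS7 w ((hmemF w).1 hwF) hyw
        _ ≤ B0 * ENNReal.ofReal (ρ ^ k) := by
            rw [volume_pi_closedBall x (by positivity)]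
            simp only [Real.volume_closedBall]
            rw [Finset.prod_const, Finset.card_univ, Fintype.card_fin,
              ← ENNReal.ofReal_pow (by positivity), hB0,
              ← ENNReal.ofReal_mul (by positivity)]
            apply ENNReal.ofReal_le_ofReal
            rw [← mul_pow, ← mul_assoc]
    have hb0 : ENNReal.ofReal (ρ ^ k) ≠ 0 := (ENNReal.ofReal_pos.2 (by positivity)).ne'
    have hbt : ENNReal.ofReal (ρ ^ k) ≠ ⊤ := ENNReal.ofReal_ne_top
    rw [show (F.card : ℝ≥0∞) * (ENNReal.ofReal (ρ ^ k) * A0)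
        = ((F.card : ℝ≥0∞) * A0) * ENNReal.ofReal (ρ ^ k) by ring] at hineq
    exact (ENNReal.mul_le_mul_iff_left hb0 hbt).1 hineq
  have hcard' : (F.card : ℝ≥0∞) ≤ B0 / A0 :=
    (ENNReal.le_div_iff_mul_le (Or.inl hA0ne) (Or.inl hA0top)).2 hcard
  -- the covering of the preimage
  have hcov : piMap φ p i₀ x₀ ⁻¹' (closedBall x ρ) ∩ Ico 0 1 ⊆ ⋃ w ∈ F, Iw p w := by
    rintro t ⟨htB, htI⟩
    have hex : ∃ m, rL r (Wd p i₀ m t) ≤ ρ := by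
      obtain ⟨M', hM'⟩ := exists_pow_lt_of_lt_one hρ0 hmax1
      refine ⟨M', le_trans ?_ hM'.le⟩
      have := rL_le_pow hr1 hmax (Wd p i₀ M' t)
      rwa [length_Wd] at this
    have hspec : rL r (Wd p i₀ (Nat.find hex) t) ≤ ρ := Nat.find_spec hex
    have hm0 : Nat.find hex ≠ 0 := by
      intro h0
      have hnil : (Wd p i₀ 0 t) = [] := List.length_eq_zero_iff.1 (length_Wd p i₀ 0 t)
      rw [h0, hnil] at hspec
      simp only [rL_nil] at hspec
      linarith
    obtain ⟨m', hm'⟩ : ∃ m'', Nat.find hex = m'' + 1 := ⟨Nat.find hex - 1, by omega⟩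
    rw [hm'] at hspec
    set w := Wd p i₀ (m' + 1) t with hwdef
    have hdrop : w.dropLast = Wd p i₀ m' t := by
      have hpre : Wd p i₀ m' t <+: w := Wd_prefix hn hp hp1 m' t
      have h1 : Wd p i₀ m' t = w.take m' := by
        have := List.prefix_iff_eq_take.1 hpre
        rwa [length_Wd] at this
      rw [List.dropLast_eq_take, length_Wd, h1]
      norm_num
    have hwΛ : w ∈ Λ := by
      refine ⟨hspec, ?_, ?_⟩
      · rw [hdrop]
        by_contra hcon
        push_neg at hcon
        exact absurd hcon (by simpa using Nat.find_min hex (by omega : m' < Nat.find hex))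
      · exact ⟨piMap φ p i₀ x₀ t,
          piMap_mem_cylinder hn hp hp1 hr1 hmax hmax1 hsim hXcp hXinv hx₀ (m' + 1) t, htB⟩
    rw [mem_iUnion₂]
    exact ⟨w, (hmemF w).2 hwΛ, Wd_spec hn hp hp1 (m' + 1) htI⟩
  -- conclusion
  rw [Measure.map_apply (measurable_piMap hn hp hp1 hr1 hmax hmax1 hsim hXcp.isBounded hXinv hx₀)
    measurableSet_closedBall,
    Measure.restrict_apply ((measurable_piMap hn hp hp1 hr1 hmax hmax1 hsim hXcp.isBounded hXinv
      hx₀) measurableSet_closedBall)]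
  calc volume (piMap φ p i₀ x₀ ⁻¹' (closedBall x ρ) ∩ Ico 0 1)
      ≤ volume (⋃ w ∈ F, Iw p w) := measure_mono hcov
    _ ≤ ∑ w ∈ F, volume (Iw p w) := measure_biUnion_finset_le F _
    _ ≤ ∑ _w ∈ F, ENNReal.ofReal (ρ ^ s) := by
        apply Finset.sum_le_sum
        intro w hw
        rw [volume_Iw]
        apply ENNReal.ofReal_le_ofReal
        rw [hpdef, Pw_eq_rL_rpow hr1]
        exact Real.rpow_le_rpow (rL_pos hr1 w).le ((hmemF w).1 hw).1 hs0
    _ = (F.card : ℝ≥0∞) * ENNReal.ofReal (ρ ^ s) := by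
        rw [Finset.sum_const, nsmul_eq_mul]
    _ ≤ (B0 / A0) * ENNReal.ofReal (ρ ^ s) := mul_le_mul_left hcard' _

end Moran

namespace Moran
variable {k n : ℕ} {φ : Fin n → (Fin k → ℝ) → (Fin k → ℝ)} {r : Fin n → ℝ}

/-- Upper bound: `dimH X ≤ s`. -/
lemma dimH_upper (hr : ∀ i, 0 < r i ∧ r i < 1)
    {Rmax : ℝ} (hmax : ∀ i, r i ≤ Rmax) (hmax1 : Rmax < 1) (hmax0 : 0 ≤ Rmax)
    (hsim : ∀ i x y, dist (φ i x) (φ i y) = r i * dist x y)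
    {X : Set (Fin k → ℝ)} (hXcp : IsCompact X) (hX : X = ⋃ i, φ i '' X)
    {s : ℝ} (hs0 : 0 ≤ s) (hp1 : ∑ i, r i ^ s = 1) :
    dimH X ≤ ENNReal.ofReal s := by
  have hr1 : ∀ i, 0 < r i := fun i => (hr i).1
  set D := Metric.diam X with hD
  have hD0 : 0 ≤ D := Metric.diam_nonneg
  have hediam : EMetric.diam X = ENNReal.ofReal D :=
    (ENNReal.ofReal_toReal hXcp.isBounded.ediam_ne_top).symm
  -- the Hausdorff measure bound
  have hμH : μH[s] X ≤ ENNReal.ofReal (D ^ s) := by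
    have hle := MeasureTheory.Measure.hausdorffMeasure_le_liminf_sum s X
      (fun m : ℕ => ENNReal.ofReal (Rmax ^ m * D))
      (by
        have h0 : Filter.Tendsto (fun m : ℕ => Rmax ^ m * D) Filter.atTop (nhds 0) := by
          simpa using (tendsto_pow_atTop_nhds_zero_of_lt_one hmax0 hmax1).mul_const D
        have h1 := ENNReal.tendsto_ofReal h0
        simpa using h1)
      (fun m (w : Fin m → Fin n) => phiL φ (List.ofFn w) '' X)
      (by
        filter_upwards with m
        intro w
        calc EMetric.diam (phiL φ (List.ofFn w) '' X)
            ≤ ((rL r (List.ofFn w)).toNNReal : ℝ≥0∞) * EMetric.diam X :=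
              (phiL_lipschitz hr1 hsim (List.ofFn w)).ediam_image_le X
          _ ≤ ENNReal.ofReal (Rmax ^ m * D) := by
              rw [hediam]
              have hco : ((rL r (List.ofFn w)).toNNReal : ℝ≥0∞)
                  = ENNReal.ofReal (rL r (List.ofFn w)) := rfl
              rw [hco, ← ENNReal.ofReal_mul (rL_pos hr1 _).le]
              apply ENNReal.ofReal_le_ofReal
              have h1 : rL r (List.ofFn w) ≤ Rmax ^ m := by
                have := rL_le_pow hr1 hmax (List.ofFn w)
                rwa [List.length_ofFn] at this
              exact mul_le_mul_of_nonneg_right h1 hD0)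
      (by
        filter_upwards with m
        intro x hx
        obtain ⟨w, hwl, hxw⟩ := attractor_cover hX m x hx
        subst hwl
        rw [mem_iUnion]
        exact ⟨w.get, by rwa [List.ofFn_get]⟩)
    refine hle.trans ?_
    have hconst : ∀ m : ℕ,
        (∑ w : Fin m → Fin n, EMetric.diam (phiL φ (List.ofFn w) '' X) ^ s)
          ≤ ENNReal.ofReal (D ^ s) := by
      intro m
      have hterm : ∀ w : Fin m → Fin n,
          EMetric.diam (phiL φ (List.ofFn w) '' X) ^ s
            ≤ ENNReal.ofReal ((rL r (List.ofFn w) * D) ^ s) := by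
        intro w
        have h1 : EMetric.diam (phiL φ (List.ofFn w) '' X)
            ≤ ENNReal.ofReal (rL r (List.ofFn w) * D) := by
          calc EMetric.diam (phiL φ (List.ofFn w) '' X)
              ≤ ((rL r (List.ofFn w)).toNNReal : ℝ≥0∞) * EMetric.diam X :=
                (phiL_lipschitz hr1 hsim (List.ofFn w)).ediam_image_le X
            _ = ENNReal.ofReal (rL r (List.ofFn w) * D) := by
                rw [hediam]
                have hco : ((rL r (List.ofFn w)).toNNReal : ℝ≥0∞)
                    = ENNReal.ofReal (rL r (List.ofFn w)) := rfl
                rw [hco, ← ENNReal.ofReal_mul (rL_pos hr1 _).le]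
        calc EMetric.diam (phiL φ (List.ofFn w) '' X) ^ s
            ≤ (ENNReal.ofReal (rL r (List.ofFn w) * D)) ^ s :=
              ENNReal.rpow_le_rpow h1 hs0
          _ = ENNReal.ofReal ((rL r (List.ofFn w) * D) ^ s) :=
              ENNReal.ofReal_rpow_of_nonneg (mul_nonneg (rL_pos hr1 _).le hD0) hs0
      calc (∑ w : Fin m → Fin n, EMetric.diam (phiL φ (List.ofFn w) '' X) ^ s)
          ≤ ∑ w : Fin m → Fin n, ENNReal.ofReal ((rL r (List.ofFn w) * D) ^ s) :=
            Finset.sum_le_sum (fun w _ => hterm w)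
        _ = ENNReal.ofReal (∑ w : Fin m → Fin n, (rL r (List.ofFn w) * D) ^ s) :=
            (ENNReal.ofReal_sum_of_nonneg (fun w _ => Real.rpow_nonneg (mul_nonneg (rL_pos hr1 _).le hD0) s)).symm
        _ = ENNReal.ofReal (D ^ s) := by
            congr 1
            have hrw : ∀ w : Fin m → Fin n,
                (rL r (List.ofFn w) * D) ^ s = (∏ j, r (w j) ^ s) * D ^ s := by
              intro w
              rw [Real.mul_rpow (rL_pos hr1 _).le hD0]
              congr 1
              have : rL r (List.ofFn w) = ∏ j, r (w j) := by
                rw [rL, List.map_ofFn, List.prod_ofFn]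
                rfl
              rw [this, ← Real.finset_prod_rpow _ _ (fun j _ => (hr1 (w j)).le)]
            rw [Finset.sum_congr rfl (fun w _ => hrw w), ← Finset.sum_mul]
            have : (∑ w : Fin m → Fin n, ∏ j, r (w j) ^ s) = 1 := by
              have hps := Finset.prod_univ_sum (fun _ : Fin m => (Finset.univ : Finset (Fin n)))
                (fun _ i => r i ^ s)
              rw [← Fintype.piFinset_univ] at *
              rw [← hps]
              simp [hp1]
            rw [this, one_mul]
    calc Filter.liminf
          (fun m : ℕ => ∑ w : Fin m → Fin n, EMetric.diam (phiL φ (List.ofFn w) '' X) ^ s)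
          Filter.atTop
        ≤ Filter.liminf (fun _ : ℕ => ENNReal.ofReal (D ^ s)) Filter.atTop := by
          apply Filter.liminf_le_liminf (by filter_upwards with m using hconst m)
      _ = ENNReal.ofReal (D ^ s) := Filter.liminf_const _
  have hd : ((s.toNNReal : ℝ≥0∞)) = ENNReal.ofReal s := rfl
  rw [← hd]
  apply dimH_le_of_hausdorffMeasure_ne_top
  rw [Real.coe_toNNReal s hs0]
  exact (hμH.trans_lt ENNReal.ofReal_lt_top).ne

end Moran

namespace Moran
variable {k n : ℕ} {φ : Fin n → (Fin k → ℝ) → (Fin k → ℝ)} {r : Fin n → ℝ}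

/-- Lower bound: `s ≤ dimH X`. -/
lemma dimH_lower (hn : 0 < n) (hr : ∀ i, 0 < r i ∧ r i < 1)
    {Rmin Rmax : ℝ} (hmin0 : 0 < Rmin) (hmin : ∀ i, Rmin ≤ r i)
    (hmax : ∀ i, r i ≤ Rmax) (hmax1 : Rmax < 1)
    (hsim : ∀ i x y, dist (φ i x) (φ i y) = r i * dist x y)
    {U X : Set (Fin k → ℝ)} (hUne : U.Nonempty) (hUo : IsOpen U)
    (hUb : Bornology.IsBounded U) (hUinv : ∀ i, φ i '' U ⊆ U)
    (hUdisj : ∀ i j, i ≠ j → Disjoint (φ i '' U) (φ j '' U))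
    (hXcp : IsCompact X) (hX : X = ⋃ i, φ i '' X)
    {s : ℝ} (hs0 : 0 < s) (hp1 : ∑ i, r i ^ s = 1)
    {i₀ : Fin n} {x₀ : Fin k → ℝ} (hx₀ : x₀ ∈ X) :
    ENNReal.ofReal s ≤ dimH X := by
  classical
  set p : Fin n → ℝ := fun i => r i ^ s with hpdef
  have hp : ∀ i, 0 < p i := fun i => Real.rpow_pos_of_pos (hr i).1 s
  have hr1 : ∀ i, 0 < r i := fun i => (hr i).1
  have hXinv : ∀ i, φ i '' X ⊆ X := by
    intro i
    conv_rhs => rw [hX]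
    exact subset_iUnion (fun j => φ j '' X) i
  have hπ : Measurable (piMap φ p i₀ x₀) :=
    measurable_piMap hn hp hp1 hr1 hmax hmax1 hsim hXcp.isBounded hXinv hx₀
  set μ : Measure (Fin k → ℝ) :=
    Measure.map (piMap φ p i₀ x₀) (volume.restrict (Ico 0 1)) with hμdef
  -- total mass
  have hμX : μ X = 1 := by
    rw [hμdef, Measure.map_apply hπ hXcp.isClosed.measurableSet,
      Measure.restrict_apply (hπ hXcp.isClosed.measurableSet)]
    have heq : piMap φ p i₀ x₀ ⁻¹' X ∩ Ico 0 1 = Ico 0 1 := by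
      apply inter_eq_self_of_subset_right
      intro t _
      exact piMap_mem_X hn hp hp1 hr1 hmax hmax1 hsim hXcp hXinv hx₀ t
    rw [heq, Real.volume_Ico]
    norm_num
  -- ball estimate
  obtain ⟨N, hNtop, hNball⟩ := ball_bound hn hr hmin0 hmin hmax hmax1 hsim hUne hUo hUb hUinv
    hUdisj hXcp hX hs0.le hp1 (i₀ := i₀) hx₀
  set N1 : ℝ≥0∞ := N + 1 with hN1def
  have hN1top : N1 ≠ ⊤ := by
    rw [hN1def]
    exact ENNReal.add_ne_top.2 ⟨hNtop, ENNReal.one_ne_top⟩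
  have hN10 : N1 ≠ 0 := by
    rw [hN1def]
    exact (zero_lt_one.trans_le le_add_self).ne'
  have hball : ∀ (x : Fin k → ℝ) (ρ : ℝ), 0 < ρ → ρ < 1 →
      μ (closedBall x ρ) ≤ N1 * ENNReal.ofReal (ρ ^ s) := by
    intro x ρ h0 h1
    exact le_trans (hNball x ρ h0 h1) (mul_le_mul_left (le_self_add) _)
  -- points are null
  have hsing : ∀ x : Fin k → ℝ, μ {x} = 0 := by
    intro x
    set q : ℝ≥0∞ := ENNReal.ofReal ((1/2 : ℝ) ^ s) with hq
    have hq1 : q < 1 := by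
      rw [hq, ← ENNReal.ofReal_one]
      exact ENNReal.ofReal_lt_ofReal_iff_of_nonneg (Real.rpow_nonneg (by norm_num) s) |>.2
        (Real.rpow_lt_one (by norm_num) (by norm_num) hs0)
    have hbd : ∀ j : ℕ, μ {x} ≤ N1 * q ^ (j + 1) := by
      intro j
      have hρ0 : (0:ℝ) < (1/2 : ℝ) ^ (j+1) := by positivity
      have hρ1 : ((1/2 : ℝ)) ^ (j+1) < 1 :=
        pow_lt_one₀ (by norm_num) (by norm_num) (Nat.succ_ne_zero j)
      have hsub : ({x} : Set (Fin k → ℝ)) ⊆ closedBall x ((1/2)^(j+1)) := by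
        intro y hy
        rw [mem_singleton_iff] at hy
        subst hy
        exact Metric.mem_closedBall_self hρ0.le
      refine le_trans (measure_mono hsub) (le_trans (hball x _ hρ0 hρ1) ?_)
      apply mul_le_mul_right
      have heq : ((1/2 : ℝ) ^ (j+1)) ^ s = ((1/2 : ℝ) ^ s) ^ (j+1) := by
        rw [← Real.rpow_natCast ((1/2 : ℝ)) (j+1), ← Real.rpow_mul (by norm_num),
          mul_comm, Real.rpow_mul (by norm_num), Real.rpow_natCast]
      rw [heq, ENNReal.ofReal_pow (Real.rpow_nonneg (by norm_num) s)]
    have htend : Tendsto (fun j : ℕ => N1 * q ^ (j + 1)) atTop (𝓝 0) := by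
      have h1 : Tendsto (fun j : ℕ => q ^ (j + 1)) atTop (𝓝 0) := by
        have := ENNReal.tendsto_pow_atTop_nhds_zero_of_lt_one hq1
        exact this.comp (tendsto_add_atTop_nat 1)
      have h2 := ENNReal.Tendsto.const_mul h1 (Or.inr hN1top)
      simpa using h2
    exact le_antisymm (ge_of_tendsto' htend hbd) zero_le
  -- general small sets
  have hA : ∀ A : Set (Fin k → ℝ), EMetric.diam A ≤ ENNReal.ofReal (1/4) →
      μ A ≤ N1 * EMetric.diam A ^ s := by
    intro A hdle
    rcases A.eq_empty_or_nonempty with rfl | ⟨a, ha⟩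
    · simp
    · have hdtop : EMetric.diam A ≠ ⊤ := (hdle.trans_lt ENNReal.ofReal_lt_top).ne
      by_cases hd0 : EMetric.diam A = 0
      · have hsub : A ⊆ {a} := by
          intro y hy
          rw [mem_singleton_iff]
          have : edist y a ≤ EMetric.diam A := EMetric.edist_le_diam_of_mem hy ha
          rw [hd0, le_zero_iff] at this
          exact edist_eq_zero.1 this
        calc μ A ≤ μ {a} := measure_mono hsub
          _ = 0 := hsing a
          _ ≤ N1 * EMetric.diam A ^ s := zero_le
      · set ρ := (EMetric.diam A).toReal with hρ
        have hρ0 : 0 < ρ := ENNReal.toReal_pos hd0 hdtop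
        have hρ1 : ρ < 1 := by
          have := ENNReal.toReal_mono ENNReal.ofReal_ne_top hdle
          rw [ENNReal.toReal_ofReal (by norm_num)] at this
          linarith
        have hsub : A ⊆ closedBall a ρ := by
          intro y hy
          rw [mem_closedBall, dist_edist]
          exact ENNReal.toReal_mono hdtop (EMetric.edist_le_diam_of_mem hy ha)
        calc μ A ≤ μ (closedBall a ρ) := measure_mono hsub
          _ ≤ N1 * ENNReal.ofReal (ρ ^ s) := hball a ρ hρ0 hρ1
          _ = N1 * EMetric.diam A ^ s := by
              rw [← ENNReal.ofReal_rpow_of_pos hρ0, hρ, ENNReal.ofReal_toReal hdtop]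
  -- mass distribution principle
  have key : ∀ t : ℕ → Set (Fin k → ℝ), X ⊆ ⋃ j, t j →
      (∀ j, EMetric.diam (t j) ≤ ENNReal.ofReal (1/4)) →
      N1⁻¹ ≤ ∑' j, ⨆ _ : (t j).Nonempty, EMetric.diam (t j) ^ s := by
    intro t hcov hdiam
    set S := ∑' j, ⨆ _ : (t j).Nonempty, EMetric.diam (t j) ^ s with hS
    have h1 : (1 : ℝ≥0∞) ≤ N1 * S := by
      calc (1 : ℝ≥0∞) = μ X := hμX.symm
        _ ≤ μ (⋃ j, t j) := measure_mono hcov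
        _ ≤ ∑' j, μ (t j) := measure_iUnion_le t
        _ ≤ ∑' j, N1 * ⨆ _ : (t j).Nonempty, EMetric.diam (t j) ^ s := by
            apply ENNReal.tsum_le_tsum
            intro j
            rcases (t j).eq_empty_or_nonempty with hje | hjne
            · rw [hje]; simp
            · rw [iSup_pos hjne]
              exact hA (t j) (hdiam j)
        _ = N1 * S := by rw [hS, ENNReal.tsum_mul_left]
    calc N1⁻¹ = N1⁻¹ * 1 := (mul_one _).symm
      _ ≤ N1⁻¹ * (N1 * S) := mul_le_mul_right h1 _
      _ = S := by rw [← mul_assoc, ENNReal.inv_mul_cancel hN10 hN1top, one_mul]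
  have hμHne : μH[s] X ≠ 0 := by
    have hge : N1⁻¹ ≤ μH[s] X := by
      rw [MeasureTheory.Measure.hausdorffMeasure_apply]
      apply le_iSup₂_of_le (ENNReal.ofReal (1/4)) (by norm_num)
      refine le_iInf fun t => le_iInf fun hcov => le_iInf fun hdiam => key t hcov hdiam
    have hpos : (0 : ℝ≥0∞) < N1⁻¹ := ENNReal.inv_pos.2 hN1top
    exact (hpos.trans_le hge).ne'
  have hcoe : ((s.toNNReal : ℝ≥0) : ℝ≥0∞) = ENNReal.ofReal s := rfl
  rw [← hcoe]
  apply le_dimH_of_hausdorffMeasure_ne_zero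
  rw [Real.coe_toNNReal s hs0.le]
  exact hμHne

end Moran

/-- Hausdorff dimension of a self-similar set under the open set condition equals the
similarity dimension. -/
theorem stmt11 (k n : ℕ) (hn : 2 ≤ n) (φ : Fin n → (Fin k → ℝ) → (Fin k → ℝ))
    (r : Fin n → ℝ) (hr : ∀ i, 0 < r i ∧ r i < 1)
    (hsim : ∀ i x y, dist (φ i x) (φ i y) = r i * dist x y)
    (hOSC : ∃ U : Set (Fin k → ℝ), U.Nonempty ∧ IsOpen U ∧ Bornology.IsBounded U ∧
      (∀ i, φ i '' U ⊆ U) ∧ ∀ i j, i ≠ j → Disjoint (φ i '' U) (φ j '' U))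
    (X : Set (Fin k → ℝ)) (hXne : X.Nonempty) (hXcp : IsCompact X)
    (hX : X = ⋃ i, φ i '' X)
    (s : ℝ) (hs : ∑ i, r i ^ s = 1) :
    dimH X = ENNReal.ofReal s := by
  obtain ⟨U, hUne, hUo, hUb, hUinv, hUdisj⟩ := hOSC
  have hn0 : 0 < n := by omega
  haveI : NeZero n := ⟨by omega⟩
  -- the similarity dimension is positive
  have hs0 : 0 < s := by
    by_contra hle
    push_neg at hle
    have h1 : ∀ i, (1:ℝ) ≤ r i ^ s := fun i =>
      Real.one_le_rpow_of_pos_of_le_one_of_nonpos (hr i).1 (hr i).2.le hle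
    have h2 : (n:ℝ) ≤ ∑ i, r i ^ s := by
      calc (n:ℝ) = ∑ _i : Fin n, (1:ℝ) := by simp
        _ ≤ _ := Finset.sum_le_sum (fun i _ => h1 i)
    rw [hs] at h2
    have h3 : (2:ℝ) ≤ (n:ℝ) := by exact_mod_cast hn
    linarith
  obtain ⟨x₀, hx₀⟩ := hXne
  have huniv : (Finset.univ : Finset (Fin n)).Nonempty := Finset.univ_nonempty
  set Rmin := Finset.univ.inf' huniv r with hRmin
  set Rmax := Finset.univ.sup' huniv r with hRmax
  have hmin : ∀ i, Rmin ≤ r i := fun i => Finset.inf'_le r (Finset.mem_univ i)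
  have hmax : ∀ i, r i ≤ Rmax := fun i => Finset.le_sup' r (Finset.mem_univ i)
  have hmin0 : 0 < Rmin := by
    obtain ⟨i, _, hi⟩ := Finset.exists_mem_eq_inf' huniv r
    rw [hRmin, hi]
    exact (hr i).1
  have hmax1 : Rmax < 1 := by
    obtain ⟨i, _, hi⟩ := Finset.exists_mem_eq_sup' huniv r
    rw [hRmax, hi]
    exact (hr i).2
  have hmax0 : 0 ≤ Rmax := ((hr 0).1.trans_le (hmax 0)).le
  exact le_antisymm
    (Moran.dimH_upper hr hmax hmax1 hmax0 hsim hXcp hX hs0.le hs)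
    (Moran.dimH_lower hn0 hr hmin0 hmin hmax hmax1 hsim hUne hUo hUb hUinv hUdisj hXcp hX
      hs0 hs (i₀ := 0) hx₀)
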